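/- The maps τ₁ : (f,g) ↦ ((g+1)/f, g) and τ₂ : (f,g) ↦ (f, (f+1)/g) on pairs of nonzero rational functions are involutions, and the composition τ₂ ∘ τ₁ has order 5, so the group generated by τ₁ and τ₂ is a dihedral group with 10 elements. -/
import Mathlib


open MvPolynomial

set_option maxHeartbeats 1600000

abbrev PentA := MvPolynomial (Fin 2) ℚ
abbrev PentK := FractionRing PentA

lemma pent_ext (σ σ' : PentK ≃ₐ[ℚ] PentK)
    (h0 : σ (algebraMap PentA PentK (X 0)) = σ' (algebraMap PentA PentK (X 0)))
    (h1 : σ (algebraMap PentA PentK (X 1)) = σ' (algebraMap PentA PentK (X 1))) : σ = σ' := by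
  have key : (σ : PentK →+* PentK) = (σ' : PentK →+* PentK) := by
    apply IsLocalization.ringHom_ext (nonZeroDivisors PentA)
    apply MvPolynomial.ringHom_ext
    · intro q
      have : algebraMap PentA PentK (C q) = algebraMap ℚ PentK q := by
        rw [← MvPolynomial.algebraMap_eq, ← IsScalarTower.algebraMap_apply]
      simp [this, AlgEquiv.commutes]
    · intro i
      fin_cases i
      · simpa using h0
      · simpa using h1
  ext a
  exact RingHom.congr_fun key a

lemma pent_nz (p : PentA) (h : p ≠ 0) : algebraMap PentA PentK p ≠ 0 :=
  (map_ne_zero_iff _ (IsFractionRing.injective PentA PentK)).mpr h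

/-- The birational maps `τ₁ : (f,g) ↦ ((g+1)/f, g)` and `τ₂ : (f,g) ↦ (f, (f+1)/g)`,
viewed as field automorphisms of `ℚ(x,y)` (pullback on coordinate functions), are
involutions, their composition has order 5, and the group they generate is a
dihedral group with 10 elements. -/
theorem pentagon_maps_dihedral_ten
    (x y : FractionRing (MvPolynomial (Fin 2) ℚ))
    (hx : x = algebraMap (MvPolynomial (Fin 2) ℚ) (FractionRing (MvPolynomial (Fin 2) ℚ)) (X 0))
    (hy : y = algebraMap (MvPolynomial (Fin 2) ℚ) (FractionRing (MvPolynomial (Fin 2) ℚ)) (X 1))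
    (τ₁ τ₂ : FractionRing (MvPolynomial (Fin 2) ℚ) ≃ₐ[ℚ] FractionRing (MvPolynomial (Fin 2) ℚ))
    (h1x : τ₁ x = (y + 1) / x) (h1y : τ₁ y = y)
    (h2x : τ₂ x = x) (h2y : τ₂ y = (x + 1) / y) :
    τ₁ * τ₁ = 1 ∧ τ₂ * τ₂ = 1 ∧ orderOf (τ₂ * τ₁) = 5 ∧
      Nat.card (Subgroup.closure ({τ₁, τ₂} :
        Set (FractionRing (MvPolynomial (Fin 2) ℚ) ≃ₐ[ℚ]
          FractionRing (MvPolynomial (Fin 2) ℚ)))) = 10 := by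
  -- basic nonvanishing facts
  have hx0 : x ≠ 0 := by
    rw [hx]
    exact pent_nz _ (by
      intro h; have := congrArg (eval (fun _ => (1:ℚ))) h; simp at this)
  have hy0 : y ≠ 0 := by
    rw [hy]
    exact pent_nz _ (by
      intro h; have := congrArg (eval (fun _ => (1:ℚ))) h; simp at this)
  have hx1 : x + 1 ≠ 0 := by
    have hrw : x + 1 = algebraMap PentA PentK (X 0 + 1) := by simp [hx]
    rw [hrw]
    exact pent_nz _ (by
      intro h; have := congrArg (eval (fun _ => (1:ℚ))) h; simp at this)
  have hy1 : y + 1 ≠ 0 := by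
    have hrw : y + 1 = algebraMap PentA PentK (X 1 + 1) := by simp [hy]
    rw [hrw]
    exact pent_nz _ (by
      intro h; have := congrArg (eval (fun _ => (1:ℚ))) h; simp at this)
  have hxy1 : x + y + 1 ≠ 0 := by
    have hrw : x + y + 1 = algebraMap PentA PentK (X 0 + X 1 + 1) := by simp [hx, hy]
    rw [hrw]
    exact pent_nz _ (by
      intro h; have := congrArg (eval (fun _ => (1:ℚ))) h; simp at this
      exact absurd this (by norm_num))
  -- an extensionality principle in terms of x, y
  have extxy : ∀ σ σ' : PentK ≃ₐ[ℚ] PentK, σ x = σ' x → σ y = σ' y → σ = σ' := by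
    intro σ σ' h0 h1
    exact pent_ext σ σ' (by rw [← hx]; exact h0) (by rw [← hy]; exact h1)
  -- values of τ₁ on the five-cycle
  have t1a3 : τ₁ ((y + 1) / x) = x := by
    rw [map_div₀, map_add, map_one, h1x, h1y]; field_simp
  have t1a4 : τ₁ ((x + y + 1) / (x * y)) = (x + 1) / y := by
    rw [map_div₀, map_add, map_add, map_one, map_mul, h1x, h1y]; field_simp; ring
  have t1a5 : τ₁ ((x + 1) / y) = (x + y + 1) / (x * y) := by
    rw [map_div₀, map_add, map_one, h1x, h1y]; field_simp; ring
  -- values of τ₂ on the five-cycle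
  have t2a5 : τ₂ ((x + 1) / y) = y := by
    rw [map_div₀, map_add, map_one, h2x, h2y]; field_simp
  have t2a3 : τ₂ ((y + 1) / x) = (x + y + 1) / (x * y) := by
    rw [map_div₀, map_add, map_one, h2x, h2y]; field_simp; ring
  have t2a4 : τ₂ ((x + y + 1) / (x * y)) = (y + 1) / x := by
    rw [map_div₀, map_add, map_add, map_one, map_mul, h2x, h2y]; field_simp; ring
  -- the two involutions
  have hτ1 : τ₁ * τ₁ = 1 := by
    apply extxy
    · rw [AlgEquiv.mul_apply, h1x, t1a3, AlgEquiv.one_apply]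
    · rw [AlgEquiv.mul_apply, h1y, h1y, AlgEquiv.one_apply]
  have hτ2 : τ₂ * τ₂ = 1 := by
    apply extxy
    · rw [AlgEquiv.mul_apply, h2x, h2x, AlgEquiv.one_apply]
    · rw [AlgEquiv.mul_apply, h2y, t2a5, AlgEquiv.one_apply]
  -- the rotation σ = τ₂ * τ₁ and its values on the five-cycle
  set σ : PentK ≃ₐ[ℚ] PentK := τ₂ * τ₁ with hσdef
  have hσx : σ x = (x + y + 1) / (x * y) := by
    rw [hσdef, AlgEquiv.mul_apply, h1x, t2a3]
  have hσy : σ y = (x + 1) / y := by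
    rw [hσdef, AlgEquiv.mul_apply, h1y, h2y]
  have hσa3 : σ ((y + 1) / x) = x := by
    rw [hσdef, AlgEquiv.mul_apply, t1a3, h2x]
  have hσa4 : σ ((x + y + 1) / (x * y)) = y := by
    rw [hσdef, AlgEquiv.mul_apply, t1a4, t2a5]
  have hσa5 : σ ((x + 1) / y) = (y + 1) / x := by
    rw [hσdef, AlgEquiv.mul_apply, t1a5, t2a4]
  -- σ has order 5
  have hσ5 : σ ^ 5 = 1 := by
    have e : σ ^ 5 = σ * (σ * (σ * (σ * σ))) := by
      rw [show (5:ℕ) = 4 + 1 from rfl, pow_succ', pow_succ', pow_succ', pow_succ', pow_one]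
    apply extxy
    · rw [e]
      simp only [AlgEquiv.mul_apply, AlgEquiv.one_apply]
      rw [hσx, hσa4, hσy, hσa5, hσa3]
    · rw [e]
      simp only [AlgEquiv.mul_apply, AlgEquiv.one_apply]
      rw [hσy, hσa5, hσa3, hσx, hσa4]
  have hσne : σ ≠ 1 := by
    intro h
    have h' : σ y = y := by rw [h, AlgEquiv.one_apply]
    rw [hσy, div_eq_iff hy0] at h'
    have : (X 0 + 1 : PentA) = X 1 * X 1 := by
      apply IsFractionRing.injective PentA PentK
      push_cast [map_add, map_mul, map_one, ← hx, ← hy]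
      exact h'
    have := congrArg (eval (fun i : Fin 2 => if i = 0 then (3:ℚ) else 0)) this
    norm_num at this
  haveI : Fact (Nat.Prime 5) := ⟨by norm_num⟩
  have horder : orderOf σ = 5 := orderOf_eq_prime hσ5 hσne
  -- τ₁ is not the identity, and not a power of σ
  have hτ1ne : τ₁ ≠ 1 := by
    intro h
    have h' : τ₁ x = x := by rw [h, AlgEquiv.one_apply]
    rw [h1x, div_eq_iff hx0] at h'
    have : (X 1 + 1 : PentA) = X 0 * X 0 := by
      apply IsFractionRing.injective PentA PentK
      push_cast [map_add, map_mul, map_one, ← hx, ← hy]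
      exact h'
    have := congrArg (eval (fun i : Fin 2 => if i = 1 then (3:ℚ) else 0)) this
    norm_num at this
  have hpowne : ∀ k : ℕ, σ ^ k ≠ τ₁ := by
    intro k h
    have h2 : σ ^ (2 * k) = 1 := by
      rw [mul_comm, pow_mul, h, sq, hτ1]
    have hdvd : 5 ∣ 2 * k := horder ▸ orderOf_dvd_of_pow_eq_one h2
    have h5k : 5 ∣ k := (Nat.Coprime.dvd_of_dvd_mul_left (by norm_num) hdvd)
    obtain ⟨m, rfl⟩ := h5k
    rw [pow_mul, hσ5, one_pow] at h
    exact hτ1ne h.symm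
  -- dihedral relations
  have hinv1 : τ₁⁻¹ = τ₁ := inv_eq_of_mul_eq_one_left hτ1
  have hinv2 : τ₂⁻¹ = τ₂ := inv_eq_of_mul_eq_one_left hτ2
  have hrel : τ₁ * σ = σ⁻¹ * τ₁ := by
    rw [hσdef, mul_inv_rev, hinv1, hinv2, mul_assoc]
  have hreln : ∀ n : ℕ, τ₁ * σ ^ n = σ⁻¹ ^ n * τ₁ := by
    intro n
    induction n with
    | zero => simp
    | succ k ih =>
        rw [pow_succ', ← mul_assoc, hrel, mul_assoc, ih, ← mul_assoc, ← pow_succ']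
  have hσinv : σ⁻¹ = σ ^ 4 := by
    apply inv_eq_of_mul_eq_one_left
    rw [← pow_succ]
    exact hσ5
  have hrel4 : ∀ n : ℕ, τ₁ * σ ^ n = σ ^ (4 * n) * τ₁ := by
    intro n
    rw [hreln n, hσinv, ← pow_mul]
  -- normalization of exponents
  have hσcast : ∀ n : ℕ, σ ^ ((n : ZMod 5)).val = σ ^ n := by
    intro n
    rw [ZMod.val_natCast, ← pow_eq_pow_mod n hσ5]
  have hτcast : ∀ n : ℕ, τ₁ ^ ((n : ZMod 2)).val = τ₁ ^ n := by
    intro n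
    rw [ZMod.val_natCast, ← pow_eq_pow_mod n (by rw [sq, hτ1] : τ₁ ^ 2 = 1)]
  -- the ten candidate elements
  set m : ZMod 5 × ZMod 2 → (PentK ≃ₐ[ℚ] PentK) :=
    fun p => σ ^ p.1.val * τ₁ ^ p.2.val with hmdef
  have hmcast : ∀ a b : ℕ, m ((a : ZMod 5), (b : ZMod 2)) = σ ^ a * τ₁ ^ b := by
    intro a b
    rw [hmdef]; simp only []
    rw [hσcast, hτcast]
  -- multiplication rule
  have hmmul : ∀ p q : ZMod 5 × ZMod 2, ∃ r, m p * m q = m r := by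
    rintro ⟨a, i⟩ ⟨b, j⟩
    fin_cases i
    · refine ⟨((a.val + b.val : ℕ), (0 + j.val : ℕ)), ?_⟩
      rw [hmcast]
      show σ ^ a.val * τ₁ ^ (0 : ZMod 2).val * (σ ^ b.val * τ₁ ^ j.val) = _
      rw [show ((0 : ZMod 2)).val = 0 from rfl, pow_zero, mul_one, pow_add, pow_add]
      group
    · refine ⟨((a.val + 4 * b.val : ℕ), (1 + j.val : ℕ)), ?_⟩
      rw [hmcast]
      show σ ^ a.val * τ₁ ^ (1 : ZMod 2).val * (σ ^ b.val * τ₁ ^ j.val) = _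
      rw [show ((1 : ZMod 2)).val = 1 from rfl, pow_one, pow_add, pow_add, pow_one]
      calc σ ^ a.val * τ₁ * (σ ^ b.val * τ₁ ^ j.val)
          = σ ^ a.val * (τ₁ * σ ^ b.val) * τ₁ ^ j.val := by group
        _ = σ ^ a.val * (σ ^ (4 * b.val) * τ₁) * τ₁ ^ j.val := by rw [hrel4]
        _ = σ ^ a.val * σ ^ (4 * b.val) * (τ₁ * τ₁ ^ j.val) := by group
  -- inverse rule
  have hzm2 : ∀ i : ZMod 2, i = 0 ∨ i = 1 := by decide
  have hminv : ∀ p : ZMod 5 × ZMod 2, ∃ r, (m p)⁻¹ = m r := by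
    rintro ⟨a, i⟩
    rcases hzm2 i with rfl | rfl
    · refine ⟨((5 - a.val : ℕ), (0 : ZMod 2)), ?_⟩
      symm
      apply eq_inv_of_mul_eq_one_left
      show σ ^ (((5 - a.val : ℕ) : ZMod 5)).val * τ₁ ^ ((0 : ZMod 2)).val *
        (σ ^ a.val * τ₁ ^ ((0 : ZMod 2)).val) = 1
      rw [hσcast, show ((0 : ZMod 2)).val = 0 from rfl, pow_zero, mul_one, mul_one,
        ← pow_add, Nat.sub_add_cancel (le_of_lt (ZMod.val_lt a)), hσ5]
    · refine ⟨(a, 1), ?_⟩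
      symm
      apply eq_inv_of_mul_eq_one_left
      show σ ^ a.val * τ₁ ^ (1 : ZMod 2).val * (σ ^ a.val * τ₁ ^ (1 : ZMod 2).val) = 1
      rw [show ((1 : ZMod 2)).val = 1 from rfl, pow_one]
      calc σ ^ a.val * τ₁ * (σ ^ a.val * τ₁)
          = σ ^ a.val * (τ₁ * σ ^ a.val) * τ₁ := by group
        _ = σ ^ a.val * (σ ^ (4 * a.val) * τ₁) * τ₁ := by rw [hrel4]
        _ = σ ^ a.val * σ ^ (4 * a.val) * (τ₁ * τ₁) := by group
        _ = σ ^ (5 * a.val) * (τ₁ * τ₁) := by rw [← pow_add]; ring_nf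
        _ = 1 := by rw [hτ1, pow_mul, hσ5, one_pow, mul_one]
  -- injectivity of m
  have hminj : Function.Injective m := by
    have hcase : ∀ (a b : ZMod 5), σ ^ a.val = σ ^ b.val → a = b := by
      intro a b h
      have := pow_eq_pow_iff_modEq.mp h
      rw [horder] at this
      have h1 : a.val % 5 = b.val % 5 := this
      rw [Nat.mod_eq_of_lt (ZMod.val_lt a), Nat.mod_eq_of_lt (ZMod.val_lt b)] at h1
      exact ZMod.val_injective 5 h1
    have hmix : ∀ (a b : ZMod 5), σ ^ a.val ≠ σ ^ b.val * τ₁ := by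
      intro a b h
      have h1 : σ ^ (5 - b.val) * σ ^ a.val = σ ^ (5 - b.val) * (σ ^ b.val * τ₁) := by rw [h]
      rw [← pow_add, ← mul_assoc, ← pow_add,
        Nat.sub_add_cancel (le_of_lt (ZMod.val_lt b)), hσ5, one_mul] at h1
      exact hpowne _ h1
    rintro ⟨a, i⟩ ⟨b, j⟩ h
    rw [hmdef] at h
    simp only [] at h
    fin_cases i <;> fin_cases j <;>
      simp only [show ((0 : ZMod 2)).val = 0 from rfl, show ((1 : ZMod 2)).val = 1 from rfl,
        pow_zero, pow_one, mul_one] at h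
    · rw [hcase a b h]
    · exact absurd h (hmix a b)
    · exact absurd h.symm (hmix b a)
    · have := mul_right_cancel h
      rw [hcase a b this]
  -- the subgroup whose carrier is the range of m
  let K : Subgroup (PentK ≃ₐ[ℚ] PentK) :=
    { carrier := Set.range m
      one_mem' := ⟨(0, 0), by
        rw [hmdef]
        show σ ^ ((0 : ZMod 5)).val * τ₁ ^ ((0 : ZMod 2)).val = 1
        simp⟩
      mul_mem' := by
        rintro _ _ ⟨p, rfl⟩ ⟨q, rfl⟩
        obtain ⟨r, hr⟩ := hmmul p q
        exact ⟨r, hr.symm⟩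
      inv_mem' := by
        rintro _ ⟨p, rfl⟩
        obtain ⟨r, hr⟩ := hminv p
        exact ⟨r, hr.symm⟩ }
  -- the closure equals K
  have hτ1K : τ₁ = m (0, 1) := by
    show τ₁ = σ ^ ((0 : ZMod 5)).val * τ₁ ^ ((1 : ZMod 2)).val
    rw [show ((0 : ZMod 5)).val = 0 from rfl, show ((1 : ZMod 2)).val = 1 from rfl,
      pow_zero, pow_one, one_mul]
  have hτ2K : τ₂ = m (1, 1) := by
    have : m ((1 : ZMod 5), (1 : ZMod 2)) = σ ^ (1 : ℕ) * τ₁ ^ (1 : ℕ) := by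
      have := hmcast 1 1
      push_cast at this ⊢
      exact this
    rw [this, pow_one, pow_one, hσdef, mul_assoc, hτ1, mul_one]
  have hHK : Subgroup.closure ({τ₁, τ₂} : Set (PentK ≃ₐ[ℚ] PentK)) = K := by
    apply le_antisymm
    · rw [Subgroup.closure_le]
      rintro g (rfl | rfl)
      · exact ⟨(0, 1), hτ1K.symm⟩
      · exact ⟨(1, 1), hτ2K.symm⟩
    · rintro _ ⟨⟨a, i⟩, rfl⟩
      have hτ1mem : τ₁ ∈ Subgroup.closure ({τ₁, τ₂} : Set (PentK ≃ₐ[ℚ] PentK)) :=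
        Subgroup.subset_closure (Or.inl rfl)
      have hτ2mem : τ₂ ∈ Subgroup.closure ({τ₁, τ₂} : Set (PentK ≃ₐ[ℚ] PentK)) :=
        Subgroup.subset_closure (Or.inr rfl)
      exact mul_mem (pow_mem (mul_mem hτ2mem hτ1mem) _) (pow_mem hτ1mem _)
  refine ⟨hτ1, hτ2, horder, ?_⟩
  rw [hHK]
  have : Nat.card K = Nat.card ↑(Set.range m) := rfl
  rw [this, Nat.card_range_of_injective hminj]
  simp [Nat.card_eq_fintype_card]
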